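/- Let M be a finite regular left duo monoid, K a field, and e, f idempotents of M such that Me is not contained in Mf. Let V be a simple KG_e-module and W a simple KG_f-module, each regarded as a KM-module by inflation along φ_e and φ_f respectively. Then Ext^n_{KM}(V, W) = 0 for all n ≥ 0. -/

import Mathlib

open CategoryTheory

open CategoryTheory Limits

noncomputable section

namespace Stmt15Aux

theorem subsingleton_of_isZero {R : Type} [Ring R] {X : ModuleCat R} (h : IsZero X) :
    Subsingleton X := by
  constructor
  intro a b
  have h0 : (𝟙 X : X ⟶ X) = 0 := h.eq_of_src _ _
  have ha := congrArg (fun (f : X ⟶ X) => f a) h0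
  have hb := congrArg (fun (f : X ⟶ X) => f b) h0
  simp only at ha hb
  calc a = (𝟙 X : X ⟶ X) a := rfl
    _ = (0 : X ⟶ X) a := ha
    _ = (0 : X ⟶ X) b := rfl
    _ = (𝟙 X : X ⟶ X) b := hb.symm
    _ = b := rfl

variable {A : Type} [Ring A] (ε : A)

/-- The submodule `A(1-ε)` of `A`. -/
def PrS : Submodule A A := Submodule.span A {1 - ε}

lemma one_sub_mem : (1 - ε) ∈ PrS ε := Submodule.mem_span_singleton_self _

lemma PrKill (hra : ∀ a : A, ε * a * ε = ε * a) : ∀ p ∈ PrS ε, ε * p = 0 := by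
  intro p hp
  obtain ⟨a, ha⟩ := Submodule.mem_span_singleton.mp hp
  rw [← ha, smul_eq_mul]
  calc ε * (a * (1 - ε)) = ε * a - ε * a * ε := by noncomm_ring
    _ = 0 := by rw [hra, sub_self]

lemma PrFix (hra : ∀ a : A, ε * a * ε = ε * a) : ∀ p ∈ PrS ε, p * (1 - ε) = p := by
  have hε : ε * ε = ε := by simpa using hra 1
  have h1 : (1 - ε) * (1 - ε) = 1 - ε := by
    calc (1 - ε) * (1 - ε) = 1 - ε - ε + ε * ε := by noncomm_ring
      _ = 1 - ε := by rw [hε]; abel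
  intro p hp
  obtain ⟨a, ha⟩ := Submodule.mem_span_singleton.mp hp
  rw [← ha, smul_eq_mul, mul_assoc, h1]

lemma prProj (hra : ∀ a : A, ε * a * ε = ε * a) : Module.Projective A ↥(PrS ε) := by
  refine Module.Projective.of_split (PrS ε).subtype
    (LinearMap.codRestrict (PrS ε) (LinearMap.toSpanSingleton A A (1 - ε))
      (fun a => Submodule.smul_mem _ _ (one_sub_mem ε))) ?_
  ext p
  simp only [LinearMap.coe_comp, Function.comp_apply, Submodule.coe_subtype,
    LinearMap.codRestrict_apply, LinearMap.toSpanSingleton_apply, LinearMap.id_coe, id_eq,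
    smul_eq_mul]
  exact PrFix ε hra _ p.2

/-- The map `A(1-ε) → X`, `p ↦ p • x`. -/
def tss (X : Type) [AddCommGroup X] [Module A X] (x : X) : ↥(PrS ε) →ₗ[A] X where
  toFun p := (p : A) • x
  map_add' p q := by simp [add_smul]
  map_smul' a p := by simp [mul_smul]

/-- A direct sum of copies of `A(1-ε)` indexed by (the elements of) `X`. -/
def Cov (X : ModuleCat A) : ModuleCat A := ModuleCat.of A (Π₀ _ : X, ↥(PrS ε))

/-- The canonical map `Cov X → X`. -/
def covπ (X : ModuleCat A) : Cov ε X ⟶ X :=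
  letI := Classical.decEq X
  ModuleCat.ofHom (DFinsupp.lsum ℕ (fun x => tss ε X x))

lemma covπ_single (X : ModuleCat A) (x : X) (p : ↥(PrS ε)) :
    covπ ε X (letI := Classical.decEq X; DFinsupp.single x p) = (p : A) • x := by
  letI := Classical.decEq X
  show (DFinsupp.lsum ℕ (fun x => tss ε X x)) (DFinsupp.single x p) = (p : A) • x
  rw [DFinsupp.lsum_single]
  rfl

lemma covπ_surj (X : ModuleCat A) (hX : ∀ x : X, ε • x = 0) :
    Function.Surjective (covπ ε X) := by
  intro x
  letI := Classical.decEq X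
  refine ⟨DFinsupp.single x ⟨1 - ε, one_sub_mem ε⟩, ?_⟩
  rw [covπ_single]
  show (1 - ε) • x = x
  rw [sub_smul, one_smul, hX, sub_zero]

lemma good_Cov (hra : ∀ a : A, ε * a * ε = ε * a) (X : ModuleCat A) :
    ∀ d : Π₀ (_ : X), ↥(PrS ε), ε • d = 0 := by
  intro d
  ext x
  rw [DFinsupp.smul_apply, DFinsupp.zero_apply]
  simp only [SetLike.val_smul, ZeroMemClass.coe_zero, smul_eq_mul]
  exact PrKill ε hra _ (d x).2

variable (V : Type) [AddCommGroup V] [Module A V]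

/-- The tower of syzygies. -/
def T : ℕ → ModuleCat A
  | 0 => ModuleCat.of A V
  | n + 1 => ModuleCat.of A ↥(LinearMap.ker (covπ ε (T n)).hom)

/-- Inclusion of the `(n+1)`-st stage into the cover of the `n`-th. -/
def incl (n : ℕ) : T ε V (n + 1) ⟶ Cov ε (T ε V n) :=
  ModuleCat.ofHom (LinearMap.ker (covπ ε (T ε V n)).hom).subtype

lemma incl_comp_covπ (n : ℕ) : incl ε V n ≫ covπ ε (T ε V n) = 0 := by
  ext k
  exact k.2

/-- The projective resolution complex. -/
def cmplx : ChainComplex (ModuleCat A) ℕ :=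
  ChainComplex.of (fun n => Cov ε (T ε V n))
    (fun n => covπ ε (T ε V (n + 1)) ≫ incl ε V n)
    (fun n => by
      rw [Category.assoc, ← Category.assoc (incl ε V (n + 1))]
      rw [incl_comp_covπ]
      simp)

lemma cmplx_d (n : ℕ) : (cmplx ε V).d (n + 1) n = covπ ε (T ε V (n + 1)) ≫ incl ε V n := by
  simp [cmplx]

lemma good_T (hra : ∀ a : A, ε * a * ε = ε * a) (hv : ∀ v : V, ε • v = 0) (n : ℕ) :
    ∀ x : T ε V n, ε • x = 0 := by
  cases n with
  | zero => exact hv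
  | succ n =>
    intro x
    apply Subtype.ext
    show ε • x.1 = (0 : Π₀ (_ : T ε V n), ↥(PrS ε))
    exact good_Cov ε hra (T ε V n) x.1

lemma cmplx_exactAt_succ (hra : ∀ a : A, ε * a * ε = ε * a) (hv : ∀ v : V, ε • v = 0)
    (n : ℕ) : (cmplx ε V).ExactAt (n + 1) := by
  rw [HomologicalComplex.exactAt_iff' _ (n + 2) (n + 1) n (by simp) (by simp)]
  rw [ShortComplex.moduleCat_exact_iff]
  intro x hx
  dsimp at x hx ⊢
  change (ConcreteCategory.hom ((cmplx ε V).d (n + 1) n)) x = 0 at hx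
  rw [cmplx_d] at hx
  have hx' : incl ε V n (covπ ε (T ε V (n + 1)) x) = 0 := hx
  have hmem : x ∈ LinearMap.ker (covπ ε (T ε V (n + 1))).hom :=
    (LinearMap.mem_ker (f := (covπ ε (T ε V (n + 1))).hom)).mpr (by exact Subtype.ext hx')
  obtain ⟨y, hy⟩ := covπ_surj ε (T ε V (n + 2)) (good_T ε V hra hv (n + 2))
    (⟨x, hmem⟩ : T ε V (n + 2))
  refine ⟨y, ?_⟩
  change (ConcreteCategory.hom ((cmplx ε V).d (n + 2) (n + 1))) y = x
  rw [cmplx_d]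
  show incl ε V (n + 1) (covπ ε (T ε V (n + 2)) y) = x
  rw [hy]
  rfl
/-- The explicit projective resolution of a module killed by `ε`. -/
def resol (hra : ∀ a : A, ε * a * ε = ε * a) (hv : ∀ v : V, ε • v = 0) :
    ProjectiveResolution (ModuleCat.of A V) where
  complex := cmplx ε V
  projective n := by
    haveI := prProj ε hra
    show Projective (Cov ε (T ε V n))
    exact (IsProjective.iff_projective _).mp inferInstance
  π := (ChainComplex.toSingle₀Equiv _ _).symm ⟨covπ ε (T ε V 0), by
    rw [cmplx_d]; exact ((Category.assoc _ _ _).trans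
      (congrArg (fun g => covπ ε (T ε V 1) ≫ g) (incl_comp_covπ ε V 0))).trans Limits.comp_zero⟩
  quasiIso := ⟨fun n => by
    cases n with
    | zero =>
      have w : (cmplx ε V).d 1 0 ≫ covπ ε (T ε V 0) = 0 := by
        rw [cmplx_d]; exact ((Category.assoc _ _ _).trans
      (congrArg (fun g => covπ ε (T ε V 1) ≫ g) (incl_comp_covπ ε V 0))).trans Limits.comp_zero
      have hex : (ShortComplex.mk ((cmplx ε V).d 1 0) (covπ ε (T ε V 0)) w).Exact := by
        rw [ShortComplex.moduleCat_exact_iff]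
        intro x hx
        have hmem : x ∈ LinearMap.ker (covπ ε (T ε V 0)).hom := (LinearMap.mem_ker (f := (covπ ε (T ε V 0)).hom)).mpr
          (by exact hx)
        obtain ⟨y, hy⟩ := covπ_surj ε (T ε V 1) (good_T ε V hra hv 1)
          (⟨x, hmem⟩ : T ε V 1)
        refine ⟨y, ?_⟩
        show ((cmplx ε V).d 1 0) y = x
        rw [cmplx_d]
        show incl ε V 0 (covπ ε (T ε V 1) y) = x
        rw [hy]
        rfl
      have hepi : Epi (ShortComplex.mk ((cmplx ε V).d 1 0) (covπ ε (T ε V 0)) w).g := by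
        rw [ModuleCat.epi_iff_surjective]
        exact covπ_surj ε (T ε V 0) (good_T ε V hra hv 0)
      rw [ChainComplex.quasiIsoAt₀_iff, ShortComplex.quasiIso_iff_of_zeros']
      · refine (ShortComplex.exact_and_epi_g_iff_of_iso ?_).2 ⟨hex, hepi⟩
        exact ShortComplex.isoMk (Iso.refl _) (Iso.refl _) (Iso.refl _)
          (by exact (Category.id_comp _).trans (Category.comp_id _).symm)
          (by exact (Category.id_comp _).trans ((Category.comp_id _).trans
            (ChainComplex.toSingle₀Equiv_symm_apply_f_zero (C := cmplx ε V) (X := ModuleCat.of A V)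
              (covπ ε (T ε V 0)) _)).symm)
      all_goals rfl
    | succ n =>
      rw [quasiIsoAt_iff_exactAt']
      · exact cmplx_exactAt_succ ε V hra hv n
      · apply ChainComplex.exactAt_succ_single_obj⟩

lemma hom_zero (X W : ModuleCat A) (hX : ∀ x : X, ε • x = 0) (hw : ∀ w : W, ε • w = w)
    (u : X ⟶ W) : u = 0 := by
  ext x
  calc u x = ε • u x := (hw (u x)).symm
    _ = u (ε • x) := (map_smul u.hom ε x).symm
    _ = u 0 := by rw [hX]
    _ = 0 := map_zero u.hom

theorem core (K : Type) [Field K] {A : Type} [Ring A] [Algebra K A] (ε : A)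
    (hra : ∀ a : A, ε * a * ε = ε * a)
    (V W : Type) [AddCommGroup V] [Module A V] [AddCommGroup W] [Module A W]
    (hv : ∀ v : V, ε • v = 0) (hw : ∀ w : W, ε • w = w) (n : ℕ) :
    Subsingleton (((Ext K (ModuleCat A) n).obj
      (Opposite.op (ModuleCat.of A V))).obj (ModuleCat.of A W)) := by
  let P := resol ε V hra hv
  apply subsingleton_of_isZero
  refine IsZero.of_iso ?_ (P.isoExt n (ModuleCat.of A W))
  rw [← HomologicalComplex.exactAt_iff_isZero_homology, HomologicalComplex.exactAt_iff]
  apply ShortComplex.exact_of_isZero_X₂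
  have hz : IsZero (((cmplx ε V).linearYonedaObj K (ModuleCat.of A W)).X n) := by
    haveI : Subsingleton (((cmplx ε V).linearYonedaObj K (ModuleCat.of A W)).X n) := by
      constructor
      intro a b
      have h1 : a = 0 := hom_zero ε (Cov ε (T ε V n)) (ModuleCat.of A W)
          (fun x => good_Cov ε hra (T ε V n) x) hw a
      have h2 : b = 0 := hom_zero ε (Cov ε (T ε V n)) (ModuleCat.of A W)
          (fun x => good_Cov ε hra (T ε V n) x) hw b
      rw [h1, h2]
    exact ModuleCat.isZero_of_subsingleton _
  exact hz

end Stmt15Aux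

end

open CategoryTheory

/-- Let `M` be a finite regular left duo monoid, `K` a field, and `e, f`
idempotents of `M` with `Me ⊄ Mf`.  Let `G_e`, `G_f` be the unit groups of `eMe`, `fMf`
(presented as abstract finite groups with multiplicative injections `ιe : Ge → M`,
`ιf : Gf → M`), and let `V` be a simple `KG_e`-module and `W` a simple `KG_f`-module, viewed
as `KM`-modules by inflation along `φ_e`, `φ_f`.  Then `Ext^n_{KM}(V, W) = 0` for all
`n ≥ 0`. -/
theorem stmt_15 (M : Type) [Monoid M] [Fintype M] (K : Type) [Field K]
    (hreg : ∀ a : M, ∃ x : M, a * x * a = a)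
    (hld : ∀ m x : M, ∃ y : M, m * x = y * m)
    (e f : M) (he : IsIdempotentElem e) (hf : IsIdempotentElem f)
    (hnle : ¬ {x : M | ∃ a : M, x = a * e} ⊆ {x : M | ∃ a : M, x = a * f})
    (Ge : Type) [Group Ge] [Fintype Ge] (ιe : Ge → M)
    (hinje : Function.Injective ιe)
    (hmule : ∀ g h : Ge, ιe (g * h) = ιe g * ιe h)
    (honee : ιe 1 = e)
    (hrangee : Set.range ιe =
      {x : M | e * x * e = x ∧ ∃ y : M, e * y * e = y ∧ x * y = e ∧ y * x = e})
    (Gf : Type) [Group Gf] [Fintype Gf] (ιf : Gf → M)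
    (hinjf : Function.Injective ιf)
    (hmulf : ∀ g h : Gf, ιf (g * h) = ιf g * ιf h)
    (honef : ιf 1 = f)
    (hrangef : Set.range ιf =
      {x : M | f * x * f = x ∧ ∃ y : M, f * y * f = y ∧ x * y = f ∧ y * x = f})
    (φe : MonoidAlgebra K M →ₐ[K] MonoidAlgebra K Ge)
    (hφe1 : ∀ (m : M) (g : Ge), ιe g = e * m →
      φe (MonoidAlgebra.of K M m) = MonoidAlgebra.of K Ge g)
    (hφe0 : ∀ m : M, (¬ ∃ g : Ge, ιe g = e * m) → φe (MonoidAlgebra.of K M m) = 0)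
    (φf : MonoidAlgebra K M →ₐ[K] MonoidAlgebra K Gf)
    (hφf1 : ∀ (m : M) (g : Gf), ιf g = f * m →
      φf (MonoidAlgebra.of K M m) = MonoidAlgebra.of K Gf g)
    (hφf0 : ∀ m : M, (¬ ∃ g : Gf, ιf g = f * m) → φf (MonoidAlgebra.of K M m) = 0)
    (V W : Type) [AddCommGroup V] [Module (MonoidAlgebra K Ge) V]
    [AddCommGroup W] [Module (MonoidAlgebra K Gf) W]
    (hV : IsSimpleModule (MonoidAlgebra K Ge) V)
    (hW : IsSimpleModule (MonoidAlgebra K Gf) W) :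
    letI : Module (MonoidAlgebra K M) V := Module.compHom V φe.toRingHom
    letI : Module (MonoidAlgebra K M) W := Module.compHom W φf.toRingHom
    let EM : ℕ → ModuleCat K := fun n =>
      ((Ext K (ModuleCat (MonoidAlgebra K M)) n).obj
        (Opposite.op (ModuleCat.of (MonoidAlgebra K M) V))).obj
        (ModuleCat.of (MonoidAlgebra K M) W)
    ∀ n : ℕ, Subsingleton ↥(EM n) := by
  classical
  -- The ideal `I = {m | e ∉ Mm}`.
  have heMf : ¬ ∃ a : M, e = a * f := by
    rintro ⟨a, ha⟩
    apply hnle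
    rintro x ⟨b, rfl⟩
    exact ⟨b * a, by rw [ha, mul_assoc]⟩
  set I : Set M := {m | ¬ ∃ a : M, e = a * m} with hIdef
  have hIl : ∀ m ∈ I, ∀ x : M, x * m ∈ I := by
    rintro m hm x ⟨a, ha⟩
    exact hm ⟨a * x, by rw [ha, mul_assoc]⟩
  have hIr : ∀ m ∈ I, ∀ x : M, m * x ∈ I := by
    rintro m hm x ⟨a, ha⟩
    obtain ⟨y, hy⟩ := hld m x
    exact hm ⟨a * y, by rw [ha, hy, mul_assoc]⟩
  have hfI : f ∈ I := heMf
  have hidem : ∀ g : M, g * g = g → ∀ m : M, g * m * g = g * m := by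
    intro g hg m
    obtain ⟨y, hy⟩ := hld g m
    rw [hy, mul_assoc, hg]
  -- Its span in the monoid algebra.
  set J : Submodule K (MonoidAlgebra K M) :=
    Submodule.span K ((fun m : M => (MonoidAlgebra.of K M) m) '' I) with hJdef
  have hgen_mem : ∀ m ∈ I, (MonoidAlgebra.of K M) m ∈ J := fun m hm =>
    Submodule.subset_span ⟨m, hm, rfl⟩
  have hmulr : ∀ m ∈ I, ∀ a : MonoidAlgebra K M, (MonoidAlgebra.of K M) m * a ∈ J := by
    intro m hm a
    induction a using MonoidAlgebra.induction_linear with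
    | zero => rw [mul_zero]; exact Submodule.zero_mem _
    | add p q hp hq => rw [mul_add]; exact Submodule.add_mem _ hp hq
    | single n c =>
      show (MonoidAlgebra.of K M) m * MonoidAlgebra.single n c ∈ J
      have : (MonoidAlgebra.of K M) m * MonoidAlgebra.single n c
          = c • (MonoidAlgebra.of K M) (m * n) := by
        simp only [MonoidAlgebra.of_apply, MonoidAlgebra.single_mul_single, one_mul,
          MonoidAlgebra.smul_single', mul_one]
      rw [this]
      exact Submodule.smul_mem _ _ (hgen_mem _ (hIr m hm n))
  have hmull : ∀ m ∈ I, ∀ a : MonoidAlgebra K M, a * (MonoidAlgebra.of K M) m ∈ J := by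
    intro m hm a
    induction a using MonoidAlgebra.induction_linear with
    | zero => rw [zero_mul]; exact Submodule.zero_mem _
    | add p q hp hq => rw [add_mul]; exact Submodule.add_mem _ hp hq
    | single n c =>
      show MonoidAlgebra.single n c * (MonoidAlgebra.of K M) m ∈ J
      have : MonoidAlgebra.single n c * (MonoidAlgebra.of K M) m
          = c • (MonoidAlgebra.of K M) (n * m) := by
        simp only [MonoidAlgebra.of_apply, MonoidAlgebra.single_mul_single, mul_one,
          MonoidAlgebra.smul_single']
      rw [this]
      exact Submodule.smul_mem _ _ (hgen_mem _ (hIl m hm n))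
  have hJmulr : ∀ j ∈ J, ∀ a : MonoidAlgebra K M, j * a ∈ J := by
    intro j hj a
    have hle : J ≤ Submodule.comap (LinearMap.mulRight K a) J := by
      rw [hJdef]
      refine Submodule.span_le.mpr ?_
      rintro _ ⟨m, hm, rfl⟩
      exact hmulr m hm a
    exact hle hj
  have hJmull : ∀ j ∈ J, ∀ a : MonoidAlgebra K M, a * j ∈ J := by
    intro j hj a
    have hle : J ≤ Submodule.comap (LinearMap.mulLeft K a) J := by
      rw [hJdef]
      refine Submodule.span_le.mpr ?_
      rintro _ ⟨m, hm, rfl⟩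
      exact hmull m hm a
    exact hle hj
  have hφeJ : ∀ j ∈ J, φe j = 0 := by
    intro j hj
    have hle : J ≤ LinearMap.ker φe.toLinearMap := by
      rw [hJdef]
      refine Submodule.span_le.mpr ?_
      rintro _ ⟨m, hm, rfl⟩
      refine LinearMap.mem_ker.mpr ?_
      show φe ((MonoidAlgebra.of K M) m) = 0
      refine hφe0 m ?_
      rintro ⟨g, hg⟩
      refine hm ⟨ιe g⁻¹ * e, ?_⟩
      have h1 : ιe g⁻¹ * ιe g = e := by rw [← hmule, inv_mul_cancel, honee]
      calc e = ιe g⁻¹ * ιe g := h1.symm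
        _ = ιe g⁻¹ * (e * m) := by rw [hg]
        _ = ιe g⁻¹ * e * m := by rw [mul_assoc]
    exact LinearMap.mem_ker.mp (hle hj)
  -- the key inductive construction of the right identity of `J`
  have key : ∀ S : Finset M, (∀ g ∈ S, g * g = g) → (∀ g ∈ S, g ∈ I) →
      ∃ ε : MonoidAlgebra K M, ε ∈ J ∧ ∀ x ∈ I, (∃ g ∈ S, x * g = x) →
        (MonoidAlgebra.of K M) x * ε = (MonoidAlgebra.of K M) x := by
    intro S
    induction S using Finset.induction_on with
    | empty =>
      intro _ _
      refine ⟨0, Submodule.zero_mem _, ?_⟩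
      rintro x hx ⟨g, hg, -⟩
      exact absurd hg (Finset.notMem_empty g)
    | @insert h S' hhS' IH =>
      intro hidems hmem
      obtain ⟨ε, hεJ, hεfix⟩ := IH (fun g hg => hidems g (Finset.mem_insert_of_mem hg))
        (fun g hg => hmem g (Finset.mem_insert_of_mem hg))
      have hhI : h ∈ I := hmem h (Finset.mem_insert_self h S')
      have hhid : h * h = h := hidems h (Finset.mem_insert_self h S')
      refine ⟨ε + (MonoidAlgebra.of K M) h - (MonoidAlgebra.of K M) h * ε, ?_, ?_⟩
      · exact Submodule.sub_mem _ (Submodule.add_mem _ hεJ (hgen_mem h hhI))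
          (hJmull ε hεJ ((MonoidAlgebra.of K M) h))
      · rintro x hx ⟨g, hgmem, hgfix⟩
        have expand : (MonoidAlgebra.of K M) x *
            (ε + (MonoidAlgebra.of K M) h - (MonoidAlgebra.of K M) h * ε)
            = (MonoidAlgebra.of K M) x * ε + (MonoidAlgebra.of K M) (x * h)
              - (MonoidAlgebra.of K M) (x * h) * ε := by
          rw [map_mul]
          noncomm_ring
        rcases Finset.mem_insert.mp hgmem with rfl | hgS'
        · -- g = h, so x * h = x
          rw [expand, hgfix]
          abel
        · -- g ∈ S'
          have hx1 : (MonoidAlgebra.of K M) x * ε = (MonoidAlgebra.of K M) x :=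
            hεfix x hx ⟨g, hgS', hgfix⟩
          have hxh : x * h ∈ I := hIr x hx h
          have hgid : g * g = g := hidems g (Finset.mem_insert_of_mem hgS')
          have hfix2 : (x * h) * g = x * h := by
            conv_lhs => rw [← hgfix]
            calc x * g * h * g = x * (g * h * g) := by simp [mul_assoc]
              _ = x * (g * h) := by rw [hidem g hgid h]
              _ = x * g * h := by rw [mul_assoc]
              _ = x * h := by rw [hgfix]
          have hx2 : (MonoidAlgebra.of K M) (x * h) * ε = (MonoidAlgebra.of K M) (x * h) :=
            hεfix (x * h) hxh ⟨g, hgS', hfix2⟩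
          rw [expand, hx1, hx2]
          abel
  obtain ⟨ε, hεJ, hεfix⟩ := key (Finset.univ.filter (fun g : M => g * g = g ∧ g ∈ I))
    (fun g hg => ((Finset.mem_filter.mp hg).2).1) (fun g hg => ((Finset.mem_filter.mp hg).2).2)
  have hεI : ∀ x ∈ I, (MonoidAlgebra.of K M) x * ε = (MonoidAlgebra.of K M) x := by
    intro x hx
    obtain ⟨y, hy⟩ := hreg x
    refine hεfix x hx ⟨y * x, ?_, ?_⟩
    · refine Finset.mem_filter.mpr ⟨Finset.mem_univ _, ?_, hIl x hx y⟩
      calc y * x * (y * x) = y * (x * y * x) := by simp [mul_assoc]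
        _ = y * x := by rw [hy]
    · rw [← mul_assoc, hy]
  have hJfix : ∀ j ∈ J, j * ε = j := by
    intro j hj
    have hle : J ≤ LinearMap.ker (LinearMap.mulRight K ε - LinearMap.id) := by
      rw [hJdef]
      refine Submodule.span_le.mpr ?_
      rintro _ ⟨m, hm, rfl⟩
      refine LinearMap.mem_ker.mpr ?_
      show (MonoidAlgebra.of K M) m * ε - (MonoidAlgebra.of K M) m = 0
      rw [hεI m hm, sub_self]
    have h2 : j * ε - j = 0 := LinearMap.mem_ker.mp (hle hj)
    exact sub_eq_zero.mp h2
  have hra : ∀ a : MonoidAlgebra K M, ε * a * ε = ε * a := fun a =>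
    hJfix (ε * a) (hJmulr ε hεJ a)
  have hφeε : φe ε = 0 := hφeJ ε hεJ
  have hφfε : φf ε = 1 := by
    have h1 : (MonoidAlgebra.of K M) f * ε = (MonoidAlgebra.of K M) f := hεI f hfI
    have h2 : φf ((MonoidAlgebra.of K M) f) = 1 := by
      have h3 := hφf1 f 1 (by rw [honef]; exact hf.symm)
      rw [h3, map_one]
    have h4 := congrArg φf h1
    rw [map_mul, h2, one_mul] at h4
    exact h4
  letI instV : Module (MonoidAlgebra K M) V := Module.compHom V φe.toRingHom
  letI instW : Module (MonoidAlgebra K M) W := Module.compHom W φf.toRingHom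
  have hv : ∀ v : V, ε • v = 0 := by
    intro v
    show φe.toRingHom ε • v = 0
    have : φe.toRingHom ε = 0 := hφeε
    rw [this, zero_smul]
  have hw : ∀ w : W, ε • w = w := by
    intro w
    show φf.toRingHom ε • w = w
    have : φf.toRingHom ε = 1 := hφfε
    rw [this, one_smul]
  exact fun n => Stmt15Aux.core K ε hra V W hv hw n
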